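/- Let a proper run-generation algorithm with buffer size M be at a decision state from which it can write either k maximal runs p_1∘⋯∘p_k or ℓ maximal runs q_1∘⋯∘q_ℓ, with |p_1∘⋯∘p_k| ≥ |q_1∘⋯∘q_ℓ|. Then for any maximal run p_{k+1} (increasing or decreasing) following p_1∘⋯∘p_k, the sequence p_1∘⋯∘p_k∘p_{k+1} covers q_1∘⋯∘q_ℓ. Consequently, the unwritten-element sequence after writing p_1∘⋯∘p_{k+1} is a subsequence of the unwritten-element sequence after writing q_1∘⋯∘q_ℓ. -/

import Mathlib

namespace RunGen

variable {α : Type*} [LinearOrder α]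

/-- A run: a contiguous monotone (nondecreasing or nonincreasing) block. -/
def IsRun (l : List α) : Prop := l.Chain' (· ≤ ·) ∨ l.Chain' (· ≥ ·)

/-- `S` can be partitioned into `n` contiguous runs. -/
def RunsInto (S : List α) (n : ℕ) : Prop :=
  ∃ P : List (List α), P.flatten = S ∧ P.length = n ∧ ∀ r ∈ P, IsRun r

/-- `R S` is the minimum number of contiguous runs into which `S` can be partitioned. -/
noncomputable def R (S : List α) : ℕ := sInf {n | RunsInto S n}

/-- `S` is an `M`-feasible output of the input `I`: `S` is a rearrangement of `I` in which
the element written at (0-indexed) step `t` lies among the first `M + t` input elements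
(a size-`M` buffer refilled after each write). -/
def IsFeasibleOutput (M : ℕ) (I S : List α) : Prop :=
  S.length = I.length ∧
    ∃ σ : Fin I.length ≃ Fin I.length,
      ∀ t : Fin I.length, S[(t : ℕ)]? = I[(σ t : ℕ)]? ∧ (σ t : ℕ) < M + (t : ℕ)

/-- `OPT M I` is the minimum of `R S` over all `M`-feasible outputs `S` of `I`. -/
noncomputable def OPT (M : ℕ) (I : List α) : ℕ :=
  sInf {n | ∃ S : List α, IsFeasibleOutput M I S ∧ RunsInto S n}

/-- The smallest buffered element that can continue an increasing run whose last written
element is `last?` (`none` at the start of a run, where the smallest element is chosen). -/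
def nextUp (last? : Option α) (B : List α) : Option α :=
  match last? with
  | none => B.min?
  | some l => (B.filter fun x => decide (l ≤ x)).min?

/-- The largest buffered element that can continue a decreasing run. -/
def nextDown (last? : Option α) (B : List α) : Option α :=
  match last? with
  | none => B.max?
  | some l => (B.filter fun x => decide (x ≤ l)).max?

/-- Writing the maximal increasing run from buffer `B` (in arrival order) and remaining input
`J` (`fuel` bounds the number of steps; `B.length + J.length` always suffices).  After each
write the next input element, if any, is ingested.  Returns
`(run written, final buffer in arrival order, final remaining input)`. -/
def incAux : ℕ → Option α → List α → List α → List α × List α × List α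
  | 0, _, B, J => ([], B, J)
  | fuel + 1, last?, B, J =>
    match nextUp last? B with
    | none => ([], B, J)
    | some x =>
      let res := incAux fuel (some x) (B.erase x ++ J.take 1) (J.drop 1)
      (x :: res.1, res.2.1, res.2.2)

/-- Writing the maximal decreasing run; see `incAux`. -/
def decAux : ℕ → Option α → List α → List α → List α × List α × List α
  | 0, _, B, J => ([], B, J)
  | fuel + 1, last?, B, J =>
    match nextDown last? B with
    | none => ([], B, J)
    | some x =>
      let res := decAux fuel (some x) (B.erase x ++ J.take 1) (J.drop 1)
      (x :: res.1, res.2.1, res.2.2)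

/-- The maximal increasing run from the state `(B, J)`. -/
def maxIncRun (B J : List α) : List α := (incAux (B.length + J.length) none B J).1

/-- The state (buffer in arrival order, remaining input) after writing the maximal
increasing run from `(B, J)`. -/
def incState (B J : List α) : List α × List α := (incAux (B.length + J.length) none B J).2

/-- The maximal decreasing run from the state `(B, J)`. -/
def maxDecRun (B J : List α) : List α := (decAux (B.length + J.length) none B J).1

/-- The state after writing the maximal decreasing run from `(B, J)`. -/
def decState (B J : List α) : List α × List α := (decAux (B.length + J.length) none B J).2

/-- The maximal run in direction `d` (`true` = increasing, `false` = decreasing). -/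
def dirRun (d : Bool) (B J : List α) : List α := if d then maxIncRun B J else maxDecRun B J

/-- The state after writing the maximal run in direction `d`. -/
def dirState (d : Bool) (B J : List α) : List α × List α :=
  if d then incState B J else decState B J

/-- `Writes B J S B' J'`: from the state with buffer `B` (in arrival order) and remaining
input `J`, an algorithm can write exactly the sequence `S` (each written element is removed
from the buffer, and the next input element, if any, is then ingested), ending at the
state `(B', J')`. -/
inductive Writes : List α → List α → List α → List α → List α → Prop
  | nil (B J : List α) : Writes B J [] B J
  | step (B J : List α) (i : ℕ) (S B' J' : List α) (h : i < B.length)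
      (hrest : Writes (B.eraseIdx i ++ J.take 1) (J.drop 1) S B' J') :
      Writes B J (B[i]'h :: S) B' J'

/-- `ProperWrites B J P B' J'`: from state `(B, J)`, a proper algorithm (one that always
writes maximal runs) can write the list of runs `P`, ending at state `(B', J')`. -/
inductive ProperWrites : List α → List α → List (List α) → List α → List α → Prop
  | nil (B J : List α) : ProperWrites B J [] B J
  | step (d : Bool) (B J : List α) (P : List (List α)) (B' J' : List α) (hB : B ≠ [])
      (h : ProperWrites (dirState d B J).1 (dirState d B J).2 P B' J') :
      ProperWrites B J (dirRun d B J :: P) B' J'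

/-- An increasing run writable from the state `(B, J)`, the last written element being
`last?`: each written element is currently buffered and is `≥` the previously written
element, and after each write the next input element (if any) is ingested. -/
inductive IncRunFrom : Option α → List α → List α → List α → Prop
  | nil (last? : Option α) (B J : List α) : IncRunFrom last? B J []
  | cons (last? : Option α) (B J : List α) (x : α) (r : List α) (hx : x ∈ B)
      (hle : ∀ l ∈ last?, l ≤ x)
      (h : IncRunFrom (some x) (B.erase x ++ J.take 1) (J.drop 1) r) :
      IncRunFrom last? B J (x :: r)

/-- A decreasing run writable from the state `(B, J)`; see `IncRunFrom`. -/
inductive DecRunFrom : Option α → List α → List α → List α → Prop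
  | nil (last? : Option α) (B J : List α) : DecRunFrom last? B J []
  | cons (last? : Option α) (B J : List α) (x : α) (r : List α) (hx : x ∈ B)
      (hge : ∀ l ∈ last?, x ≤ l)
      (h : DecRunFrom (some x) (B.erase x ++ J.take 1) (J.drop 1) r) :
      DecRunFrom last? B J (x :: r)

/-- The optimal number of runs over all ways of writing out everything from state `(B, J)`. -/
noncomputable def OPTFrom (B J : List α) : ℕ :=
  sInf {n | ∃ S : List α, Writes B J S [] [] ∧ RunsInto S n}

/-- Running a deterministic online algorithm `A`: at each step, given the current buffer
(in arrival order) and the output written so far, `A` chooses (the index of) the buffered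
element to write next; the next input element is then ingested. -/
def runAlg (A : List α → List α → ℕ) : ℕ → List α → List α → List α → List α
  | 0, _, _, _ => []
  | fuel + 1, W, B, J =>
    match B with
    | [] => []
    | b :: Bt =>
      let i := A (b :: Bt) W % (b :: Bt).length
      let x := (b :: Bt).getD i b
      x :: runAlg A fuel (W ++ [x]) ((b :: Bt).eraseIdx i ++ J.take 1) (J.drop 1)

/-- The output of the deterministic online algorithm `A` run with buffer size `M` on
input `I`. -/
def onlineOutput (A : List α → List α → ℕ) (M : ℕ) (I : List α) : List α :=
  runAlg A I.length [] (I.take M) (I.drop M)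

/-- Running a deterministic algorithm with `v`-lookahead: its choice of which buffered
element to write may additionally depend on the next `v` not-yet-read input elements. -/
def runAlgVis (A : List α → List α → List α → ℕ) (v : ℕ) :
    ℕ → List α → List α → List α → List α
  | 0, _, _, _ => []
  | fuel + 1, W, B, J =>
    match B with
    | [] => []
    | b :: Bt =>
      let i := A (b :: Bt) W (J.take v) % (b :: Bt).length
      let x := (b :: Bt).getD i b
      x :: runAlgVis A v fuel (W ++ [x]) ((b :: Bt).eraseIdx i ++ J.take 1) (J.drop 1)

/-- The output of the deterministic algorithm `A` with buffer size `M` and `v`-lookahead. -/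
def visOutput (A : List α → List α → List α → ℕ) (v M : ℕ) (I : List α) : List α :=
  runAlgVis A v I.length [] (I.take M) (I.drop M)

/-- Alternating up-down replacement selection from a state (starting with an increasing
run when `d = true`), writing maximal runs of strictly alternating directions. -/
def altAux : ℕ → Bool → List α → List α → List α
  | 0, _, _, _ => []
  | fuel + 1, d, B, J =>
    if B = [] then []
    else dirRun d B J ++ altAux fuel (!d) (dirState d B J).1 (dirState d B J).2

/-- The output of alternating up-down replacement selection with buffer size `M` on `I`. -/
def altOutput (M : ℕ) (I : List α) : List α :=
  altAux (I.length + 1) true (I.take M) (I.drop M)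

/-- `GreedyRuns B J P`: `P` is the list of runs written by (some tie-breaking of) the
greedy algorithm from state `(B, J)`: at each decision point it writes the longer of the
two possible maximal runs (ties broken arbitrarily). -/
inductive GreedyRuns : List α → List α → List (List α) → Prop
  | nil : GreedyRuns [] [] []
  | step (d : Bool) (B J : List α) (P : List (List α)) (hB : B ≠ [])
      (hlen : (dirRun (!d) B J).length ≤ (dirRun d B J).length)
      (h : GreedyRuns (dirState d B J).1 (dirState d B J).2 P) :
      GreedyRuns B J (dirRun d B J :: P)

/-- `PTASOut k B J S`: `S` is a possible output of the phase-based offline approximation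
algorithm with parameter `k` from state `(B, J)`: while more than `k` runs remain, it
selects a sequence of `k` consecutive maximal runs writing the longest total number of
elements and writes them, followed by one additional maximal run; once everything can be
written in at most `k` (maximal) runs, it finishes using the fewest possible runs. -/
inductive PTASOut (k : ℕ) : List α → List α → List α → Prop
  | final (B J : List α) (P : List (List α)) (hP : ProperWrites B J P [] [])
      (hk : P.length ≤ k)
      (hmin : ∀ Q : List (List α), ProperWrites B J Q [] [] → P.length ≤ Q.length) :
      PTASOut k B J P.flatten
  | phase (B J : List α) (P : List (List α)) (B' J' : List α) (r : List α)
      (B'' J'' : List α) (S : List α)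
      (hnf : ¬∃ Q : List (List α), ProperWrites B J Q [] [] ∧ Q.length ≤ k)
      (hP : ProperWrites B J P B' J') (hPk : P.length = k)
      (hmax : ∀ (Q : List (List α)) (BQ JQ : List α),
        ProperWrites B J Q BQ JQ → Q.length = k → Q.flatten.length ≤ P.flatten.length)
      (hr : ProperWrites B' J' [r] B'' J'') (hS : PTASOut k B'' J'' S) :
      PTASOut k B J (P.flatten ++ (r ++ S))

/-- An input is `c`-nearly-sorted (for buffer size `M`) if some proper optimal output
consists entirely of runs of length at least `c * M`. -/
def NearlySorted (c M : ℕ) (I : List α) : Prop :=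
  ∃ P : List (List α), ProperWrites (I.take M) (I.drop M) P [] [] ∧
    R P.flatten = OPT M I ∧ ∀ r ∈ P, c * M ≤ r.length

end RunGen

open RunGen

section Aux

open List

variable {α : Type*} [LinearOrder α]

private lemma take_add' (l : List α) (m n : ℕ) :
    l.take (m + n) = l.take m ++ (l.drop m).take n := by
  induction m generalizing l with
  | zero => simp
  | succ m ih =>
    cases l with
    | nil => simp
    | cons a t => simp only [Nat.succ_add, List.take_succ_cons, List.drop_succ_cons,
        List.cons_append, ih]

private lemma count_diff' (x : α) (s : List α) : ∀ l : List α,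
    (l.diff s).count x = l.count x - s.count x := by
  induction s with
  | nil => simp
  | cons a t ih =>
    intro l
    rw [List.diff_cons, ih, List.count_erase, List.count_cons]
    by_cases h : a = x
    · subst h; simp; omega
    · simp [h, Ne.symm h]

private lemma diff_append_of_le (s : List α) : ∀ l m : List α,
    (∀ x, s.count x ≤ l.count x) → (l ++ m).diff s = l.diff s ++ m := by
  induction s with
  | nil => simp
  | cons a t ih =>
    intro l m h
    have ha : a ∈ l := by
      have := h a
      simp [List.count_cons] at this
      exact List.count_pos_iff.1 (by omega)
    rw [List.diff_cons, List.diff_cons, List.erase_append_left _ ha]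
    refine ih _ _ (fun x => ?_)
    have := h x
    rw [List.count_erase]
    rw [List.count_cons] at this
    by_cases hx : x = a
    · subst hx; simp at this ⊢; omega
    · simp [hx, Ne.symm hx] at this ⊢; omega

private lemma diff_sublist_diff (l s₁ s₂ : List α) (h : ∀ x, s₂.count x ≤ s₁.count x) :
    l.diff s₁ <+ l.diff s₂ := by
  have hsub : (s₂ : Multiset α) ≤ (s₁ : Multiset α) := by
    rw [Multiset.le_iff_count]
    simpa using h
  obtain ⟨u, hu⟩ := Multiset.le_iff_exists_add.1 hsub
  obtain ⟨t, rfl⟩ := u.exists_rep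
  have hperm : s₁ ~ s₂ ++ t := by
    rw [← Multiset.coe_eq_coe]
    simpa using hu
  rw [List.Perm.diff_left l hperm, List.diff_append]
  exact List.diff_sublist _ _

end Aux

section Main

open List RunGen

variable {α : Type*} [LinearOrder α]

private lemma nextUp_none {last? : Option α} {B : List α} (h : nextUp last? B = none)
    {b : α} (hb : b ∈ B) (hl : ∀ l ∈ last?, l ≤ b) : False := by
  cases last? with
  | none =>
    simp [nextUp, List.min?_eq_none_iff] at h
    subst h; simp at hb
  | some l =>
    simp only [nextUp, List.min?_eq_none_iff, List.filter_eq_nil_iff] at h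
    exact h b hb (by simpa using hl l rfl)

private lemma nextUp_some {last? : Option α} {B : List α} {x : α}
    (h : nextUp last? B = some x) :
    x ∈ B ∧ (∀ l ∈ last?, l ≤ x) ∧ ∀ b ∈ B, (∀ l ∈ last?, l ≤ b) → x ≤ b := by
  cases last? with
  | none =>
    simp only [nextUp] at h
    refine ⟨List.min?_mem h, by simp, fun b hb _ => ?_⟩
    exact (List.le_min?_iff h).1 le_rfl b hb
  | some l =>
    simp only [nextUp] at h
    have hx := List.min?_mem h
    simp only [List.mem_filter, decide_eq_true_eq] at hx
    refine ⟨hx.1, by simpa using hx.2, fun b hb hlb => ?_⟩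
    refine (List.le_min?_iff h).1 le_rfl b ?_
    simp only [List.mem_filter, decide_eq_true_eq]
    exact ⟨hb, hlb l rfl⟩

private lemma nextDown_none {last? : Option α} {B : List α} (h : nextDown last? B = none)
    {b : α} (hb : b ∈ B) (hl : ∀ l ∈ last?, b ≤ l) : False := by
  cases last? with
  | none =>
    simp [nextDown, List.max?_eq_none_iff] at h
    subst h; simp at hb
  | some l =>
    simp only [nextDown, List.max?_eq_none_iff, List.filter_eq_nil_iff] at h
    exact h b hb (by simpa using hl l rfl)

private lemma nextDown_some {last? : Option α} {B : List α} {x : α}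
    (h : nextDown last? B = some x) :
    x ∈ B ∧ (∀ l ∈ last?, x ≤ l) ∧ ∀ b ∈ B, (∀ l ∈ last?, b ≤ l) → b ≤ x := by
  cases last? with
  | none =>
    simp only [nextDown] at h
    refine ⟨List.max?_mem h, by simp, fun b hb _ => ?_⟩
    exact (List.max?_le_iff h).1 le_rfl b hb
  | some l =>
    simp only [nextDown] at h
    have hx := List.max?_mem h
    simp only [List.mem_filter, decide_eq_true_eq] at hx
    refine ⟨hx.1, by simpa using hx.2, fun b hb hlb => ?_⟩
    refine (List.max?_le_iff h).1 le_rfl b ?_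
    simp only [List.mem_filter, decide_eq_true_eq]
    exact ⟨hb, hlb l rfl⟩

private lemma incAux_spec : ∀ (fuel : ℕ) (last? : Option α) (B J : List α),
    B.length + J.length ≤ fuel →
    (incAux fuel last? B J).2.2 = J.drop (incAux fuel last? B J).1.length ∧
    (incAux fuel last? B J).2.1
      = (B ++ J.take (incAux fuel last? B J).1.length).diff (incAux fuel last? B J).1 ∧
    ∀ x : α, (incAux fuel last? B J).1.count x
      ≤ (B ++ J.take (incAux fuel last? B J).1.length).count x := by
  intro fuel
  induction fuel with
  | zero => intro last? B J _; simp [incAux]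
  | succ fuel ih =>
    intro last? B J hf
    rcases hnu : nextUp last? B with _ | x
    · simp [incAux, hnu]
    · have hx := (nextUp_some hnu).1
      have hBpos : 1 ≤ B.length := List.length_pos_iff.2 (by rintro rfl; simp at hx)
      have hf' : (B.erase x ++ J.take 1).length + (J.drop 1).length ≤ fuel := by
        rw [List.length_append, List.length_erase_of_mem hx, List.length_take,
          List.length_drop]
        omega
      obtain ⟨ih1, ih2, ih3⟩ := ih (some x) (B.erase x ++ J.take 1) (J.drop 1) hf'
      simp only [incAux, hnu]
      set res := incAux fuel (some x) (B.erase x ++ J.take 1) (J.drop 1) with hres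
      have hkey : (B.erase x ++ J.take 1) ++ (J.drop 1).take res.1.length
          = (B ++ J.take (res.1.length + 1)).erase x := by
        rw [List.append_assoc, ← take_add' J 1 res.1.length, List.erase_append_left _ hx,
          Nat.add_comm 1 res.1.length]
      refine ⟨?_, ?_, ?_⟩
      · rw [ih1]
        simp only [List.length_cons, List.drop_drop]
        rw [Nat.add_comm res.1.length 1]
      · rw [ih2, hkey]
        simp only [List.length_cons, List.diff_cons]
      · intro y
        have h3 := ih3 y
        rw [hkey, List.count_erase] at h3
        have hxB : 0 < B.count x := List.count_pos_iff.2 hx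
        simp only [List.length_cons, List.count_cons, List.count_append] at h3 ⊢
        by_cases hyx : y = x
        · subst hyx
          simp only [beq_self_eq_true, if_true] at h3 ⊢
          omega
        · rw [if_neg (by simpa using Ne.symm hyx)] at h3
          rw [if_neg (by simpa using Ne.symm hyx)]
          omega

private lemma decAux_spec : ∀ (fuel : ℕ) (last? : Option α) (B J : List α),
    B.length + J.length ≤ fuel →
    (decAux fuel last? B J).2.2 = J.drop (decAux fuel last? B J).1.length ∧
    (decAux fuel last? B J).2.1
      = (B ++ J.take (decAux fuel last? B J).1.length).diff (decAux fuel last? B J).1 ∧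
    ∀ x : α, (decAux fuel last? B J).1.count x
      ≤ (B ++ J.take (decAux fuel last? B J).1.length).count x := by
  intro fuel
  induction fuel with
  | zero => intro last? B J _; simp [decAux]
  | succ fuel ih =>
    intro last? B J hf
    rcases hnu : nextDown last? B with _ | x
    · simp [decAux, hnu]
    · have hx := (nextDown_some hnu).1
      have hBpos : 1 ≤ B.length := List.length_pos_iff.2 (by rintro rfl; simp at hx)
      have hf' : (B.erase x ++ J.take 1).length + (J.drop 1).length ≤ fuel := by
        rw [List.length_append, List.length_erase_of_mem hx, List.length_take,
          List.length_drop]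
        omega
      obtain ⟨ih1, ih2, ih3⟩ := ih (some x) (B.erase x ++ J.take 1) (J.drop 1) hf'
      simp only [decAux, hnu]
      set res := decAux fuel (some x) (B.erase x ++ J.take 1) (J.drop 1) with hres
      have hkey : (B.erase x ++ J.take 1) ++ (J.drop 1).take res.1.length
          = (B ++ J.take (res.1.length + 1)).erase x := by
        rw [List.append_assoc, ← take_add' J 1 res.1.length, List.erase_append_left _ hx,
          Nat.add_comm 1 res.1.length]
      refine ⟨?_, ?_, ?_⟩
      · rw [ih1]
        simp only [List.length_cons, List.drop_drop]
        rw [Nat.add_comm res.1.length 1]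
      · rw [ih2, hkey]
        simp only [List.length_cons, List.diff_cons]
      · intro y
        have h3 := ih3 y
        rw [hkey, List.count_erase] at h3
        have hxB : 0 < B.count x := List.count_pos_iff.2 hx
        simp only [List.length_cons, List.count_cons, List.count_append] at h3 ⊢
        by_cases hyx : y = x
        · subst hyx
          simp only [beq_self_eq_true, if_true] at h3 ⊢
          omega
        · rw [if_neg (by simpa using Ne.symm hyx)] at h3
          rw [if_neg (by simpa using Ne.symm hyx)]
          omega

private lemma incAux_consume : ∀ (fuel : ℕ) (last? : Option α) (B J : List α),
    B.length + J.length ≤ fuel → ∀ y : α, (∀ l ∈ last?, l ≤ y) →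
    B.count y ≤ (incAux fuel last? B J).1.count y := by
  intro fuel
  induction fuel with
  | zero =>
    intro last? B J hf y _
    have : B = [] := by
      cases B with
      | nil => rfl
      | cons a t => simp at hf
    simp [this]
  | succ fuel ih =>
    intro last? B J hf y hy
    rcases hnu : nextUp last? B with _ | x
    · by_cases hyB : y ∈ B
      · exact absurd (nextUp_none hnu hyB hy) (by simp)
      · simp [incAux, hnu, List.count_eq_zero.2 hyB]
    · obtain ⟨hx, _hlx, hmin⟩ := nextUp_some hnu
      have hBpos : 1 ≤ B.length := List.length_pos_iff.2 (by rintro rfl; simp at hx)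
      have hf' : (B.erase x ++ J.take 1).length + (J.drop 1).length ≤ fuel := by
        rw [List.length_append, List.length_erase_of_mem hx, List.length_take,
          List.length_drop]
        omega
      simp only [incAux, hnu]
      by_cases hxy : x ≤ y
      · have hrec := ih (some x) (B.erase x ++ J.take 1) (J.drop 1) hf' y
          (by simpa using hxy)
        rw [List.count_append, List.count_erase] at hrec
        simp only [List.count_cons]
        by_cases hyx : y = x
        · subst hyx
          simp only [beq_self_eq_true, if_true] at hrec ⊢
          omega
        · rw [if_neg (by simpa using Ne.symm hyx)] at hrec
          rw [if_neg (by simpa using Ne.symm hyx)]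
          omega
      · have hyB : y ∉ B := fun hyB => hxy (hmin y hyB hy)
        simp [List.count_eq_zero.2 hyB]

private lemma decAux_consume : ∀ (fuel : ℕ) (last? : Option α) (B J : List α),
    B.length + J.length ≤ fuel → ∀ y : α, (∀ l ∈ last?, y ≤ l) →
    B.count y ≤ (decAux fuel last? B J).1.count y := by
  intro fuel
  induction fuel with
  | zero =>
    intro last? B J hf y _
    have : B = [] := by
      cases B with
      | nil => rfl
      | cons a t => simp at hf
    simp [this]
  | succ fuel ih =>
    intro last? B J hf y hy
    rcases hnu : nextDown last? B with _ | x
    · by_cases hyB : y ∈ B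
      · exact absurd (nextDown_none hnu hyB hy) (by simp)
      · simp [decAux, hnu, List.count_eq_zero.2 hyB]
    · obtain ⟨hx, _hlx, hmax⟩ := nextDown_some hnu
      have hBpos : 1 ≤ B.length := List.length_pos_iff.2 (by rintro rfl; simp at hx)
      have hf' : (B.erase x ++ J.take 1).length + (J.drop 1).length ≤ fuel := by
        rw [List.length_append, List.length_erase_of_mem hx, List.length_take,
          List.length_drop]
        omega
      simp only [decAux, hnu]
      by_cases hxy : y ≤ x
      · have hrec := ih (some x) (B.erase x ++ J.take 1) (J.drop 1) hf' y
          (by simpa using hxy)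
        rw [List.count_append, List.count_erase] at hrec
        simp only [List.count_cons]
        by_cases hyx : y = x
        · subst hyx
          simp only [beq_self_eq_true, if_true] at hrec ⊢
          omega
        · rw [if_neg (by simpa using Ne.symm hyx)] at hrec
          rw [if_neg (by simpa using Ne.symm hyx)]
          omega
      · have hyB : y ∉ B := fun hyB => hxy (hmax y hyB hy)
        simp [List.count_eq_zero.2 hyB]

private lemma dirRun_spec (d : Bool) (B J : List α) :
    (dirState d B J).2 = J.drop (dirRun d B J).length ∧
    (dirState d B J).1 = (B ++ J.take (dirRun d B J).length).diff (dirRun d B J) ∧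
    ∀ x : α, (dirRun d B J).count x ≤ (B ++ J.take (dirRun d B J).length).count x := by
  cases d with
  | false =>
    simpa [dirRun, dirState, maxDecRun, decState] using
      decAux_spec (B.length + J.length) none B J le_rfl
  | true =>
    simpa [dirRun, dirState, maxIncRun, incState] using
      incAux_spec (B.length + J.length) none B J le_rfl

private lemma dirRun_consume (d : Bool) (B J : List α) (y : α) :
    B.count y ≤ (dirRun d B J).count y := by
  cases d with
  | false =>
    simpa [dirRun, maxDecRun] using
      decAux_consume (B.length + J.length) none B J le_rfl y (by simp)
  | true =>
    simpa [dirRun, maxIncRun] using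
      incAux_consume (B.length + J.length) none B J le_rfl y (by simp)

private lemma pw_spec {B J : List α} {P : List (List α)} {B' J' : List α}
    (h : ProperWrites B J P B' J') :
    J' = J.drop P.flatten.length ∧
    B' = (B ++ J.take P.flatten.length).diff P.flatten ∧
    ∀ x : α, P.flatten.count x ≤ (B ++ J.take P.flatten.length).count x := by
  induction h with
  | nil B J => simp
  | step d B J P B' J' hB h ih =>
    obtain ⟨s1, s2, s3⟩ := dirRun_spec d B J
    obtain ⟨ih1, ih2, ih3⟩ := ih
    have hflat : (dirRun d B J :: P).flatten = dirRun d B J ++ P.flatten := by simp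
    have hflen : (dirRun d B J :: P).flatten.length
        = (dirRun d B J).length + P.flatten.length := by simp
    have hJtake : B ++ J.take ((dirRun d B J).length + P.flatten.length)
        = (B ++ J.take (dirRun d B J).length)
          ++ (J.drop (dirRun d B J).length).take P.flatten.length := by
      rw [take_add' J (dirRun d B J).length P.flatten.length, List.append_assoc]
    have hkey : (B ++ J.take (dirRun d B J).length).diff (dirRun d B J)
          ++ (J.drop (dirRun d B J).length).take P.flatten.length
        = (B ++ J.take ((dirRun d B J).length + P.flatten.length)).diff (dirRun d B J) := by
      rw [hJtake, diff_append_of_le (dirRun d B J) _ _ s3]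
    refine ⟨?_, ?_, ?_⟩
    · rw [hflen, ih1, s1, List.drop_drop]
    · calc B' = ((dirState d B J).1
            ++ (dirState d B J).2.take P.flatten.length).diff P.flatten := ih2
        _ = ((B ++ J.take (dirRun d B J).length).diff (dirRun d B J)
            ++ (J.drop (dirRun d B J).length).take P.flatten.length).diff P.flatten := by
          rw [s2, s1]
        _ = ((B ++ J.take ((dirRun d B J).length + P.flatten.length)).diff
            (dirRun d B J)).diff P.flatten := by rw [hkey]
        _ = (B ++ J.take ((dirRun d B J).length + P.flatten.length)).diff
            (dirRun d B J ++ P.flatten) := (List.diff_append _ _ _).symm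
        _ = (B ++ J.take ((dirRun d B J :: P).flatten.length)).diff
            ((dirRun d B J :: P).flatten) := by rw [hflen, hflat]
    · intro x
      have h3 := ih3 x
      rw [s2, s1] at h3
      have hcd := count_diff' x (dirRun d B J) (B ++ J.take (dirRun d B J).length)
      have hc1 := s3 x
      rw [hflen, hflat, hJtake]
      rw [List.count_append] at h3
      rw [hcd] at h3
      simp only [List.count_append] at h3 hc1 ⊢
      omega

private theorem stmt_4_aux {α : Type*} [LinearOrder α] (B J : List α)
    (P Q : List (List α)) (Bp Jp Bq Jq : List α)
    (hP : ProperWrites B J P Bp Jp) (hQ : ProperWrites B J Q Bq Jq)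
    (hlen : Q.flatten.length ≤ P.flatten.length)
    (p' : List α) (Bp' Jp' : List α) (hp' : ProperWrites Bp Jp [p'] Bp' Jp') :
    (∀ e ∈ Q.flatten, e ∈ P.flatten ++ p') ∧ (Bp' ++ Jp').Sublist (Bq ++ Jq) := by
  obtain ⟨d, rfl, hBp', hJp'⟩ : ∃ d : Bool, p' = dirRun d Bp Jp ∧
      Bp' = (dirState d Bp Jp).1 ∧ Jp' = (dirState d Bp Jp).2 := by
    cases hp' with
    | step d _ _ P' B'' J'' hBne h =>
      cases h with
      | nil => exact ⟨d, rfl, rfl, rfl⟩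
  obtain ⟨hPJ, hPB, hPc⟩ := pw_spec hP
  obtain ⟨hQJ, hQB, hQc⟩ := pw_spec hQ
  obtain ⟨hpJ, hpB, hpc⟩ := dirRun_spec d Bp Jp
  have htqtp : Q.flatten.length ≤ P.flatten.length + (dirRun d Bp Jp).length :=
    le_trans hlen (Nat.le_add_right _ _)
  have hcount : ∀ x : α,
      Q.flatten.count x ≤ (P.flatten ++ dirRun d Bp Jp).count x := by
    intro x
    have h1 := hQc x
    have h2 : (J.take Q.flatten.length).count x
        ≤ (J.take P.flatten.length).count x := by
      have he : J.take Q.flatten.length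
          = (J.take P.flatten.length).take Q.flatten.length := by
        rw [List.take_take, min_eq_left hlen]
      rw [he]
      exact (List.take_sublist _ _).count_le x
    have h3 : Bp.count x
        = (B ++ J.take P.flatten.length).count x - P.flatten.count x := by
      rw [hPB]; exact count_diff' x _ _
    have h4 := dirRun_consume d Bp Jp x
    have h5 := hPc x
    rw [List.count_append] at h1 h3 h5 ⊢
    omega
  refine ⟨fun e he => ?_, ?_⟩
  · exact List.count_pos_iff.1 (lt_of_lt_of_le (List.count_pos_iff.2 he) (hcount e))
  · have hJp'' : Jp' = J.drop (P.flatten.length + (dirRun d Bp Jp).length) := by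
      rw [hJp', hpJ, hPJ, List.drop_drop]
    have hBp'eq : Bp'
        = (B ++ J.take (P.flatten.length + (dirRun d Bp Jp).length)).diff
          (P.flatten ++ dirRun d Bp Jp) := by
      rw [hBp', hpB, hPB, hPJ, ← diff_append_of_le P.flatten _ _ hPc,
        List.append_assoc, ← take_add', ← List.diff_append]
    have hmid : J.drop Q.flatten.length
        = (J.drop Q.flatten.length).take
            (P.flatten.length + (dirRun d Bp Jp).length - Q.flatten.length)
          ++ J.drop (P.flatten.length + (dirRun d Bp Jp).length) := by
      conv_lhs => rw [← List.take_append_drop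
        (P.flatten.length + (dirRun d Bp Jp).length - Q.flatten.length)
        (J.drop Q.flatten.length)]
      rw [List.drop_drop, Nat.add_sub_cancel' htqtp]
    have hBqJq : Bq ++ Jq
        = (B ++ J.take (P.flatten.length + (dirRun d Bp Jp).length)).diff Q.flatten
          ++ J.drop (P.flatten.length + (dirRun d Bp Jp).length) := by
      rw [hQB, hQJ, hmid, ← List.append_assoc, ← diff_append_of_le Q.flatten _ _ hQc,
        List.append_assoc, ← take_add', Nat.add_sub_cancel' htqtp]
    rw [hJp'', hBp'eq, hBqJq]
    exact (diff_sublist_diff _ _ _ hcount).append (List.Sublist.refl _)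

end Main

/-- If from a decision state a proper algorithm can write the maximal-run sequence `P`
(k runs) or the maximal-run sequence `Q` (ℓ runs), with `|Q.flatten| ≤ |P.flatten|`, then
`P` extended by any further maximal run `p'` covers `Q.flatten`; consequently the
unwritten-element sequence after `P ++ [p']` is a subsequence of the unwritten-element
sequence after `Q`. -/
theorem stmt_4 {α : Type*} [LinearOrder α] (M : ℕ) (B J : List α) (hB : B.length ≤ M)
    (P Q : List (List α)) (Bp Jp Bq Jq : List α)
    (hP : ProperWrites B J P Bp Jp) (hQ : ProperWrites B J Q Bq Jq)
    (hlen : Q.flatten.length ≤ P.flatten.length)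
    (p' : List α) (Bp' Jp' : List α) (hp' : ProperWrites Bp Jp [p'] Bp' Jp') :
    (∀ e ∈ Q.flatten, e ∈ P.flatten ++ p') ∧ (Bp' ++ Jp').Sublist (Bq ++ Jq) :=
  stmt_4_aux B J P Q Bp Jp Bq Jq hP hQ hlen p' Bp' Jp' hp'
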